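/- Let n ≥ 3, let J_n ∈ M_n(ℂ) be the nilpotent Jordan block, and let B_n = E_{n−1,1} − E_{n,2} ∈ M_n(ℂ). Then the ℂ-linear span of all products of between 1 and 2n − 2 elements of {J_n, B_n} is all of M_n(ℂ). Combined with the fact that products of length at most 2n − 3 do not suffice, this says l_0({J_n, B_n}) = 2n − 2. -/

import Mathlib

open Matrix



/-- The `n × n` nilpotent Jordan block over `ℂ`. -/
def jordan (n : ℕ) : Matrix (Fin n) (Fin n) ℂ :=
  Matrix.of fun a b => if (a : ℕ) + 1 = (b : ℕ) then 1 else 0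

/-- `L_k^0(S)`: the ℂ-linear span of all words in `S` of length between `1` and `k`. -/
noncomputable def wordSpan0 (n k : ℕ) (S : Set (Matrix (Fin n) (Fin n) ℂ)) :
    Submodule ℂ (Matrix (Fin n) (Fin n) ℂ) :=
  Submodule.span ℂ {M | ∃ w : List (Matrix (Fin n) (Fin n) ℂ),
    1 ≤ w.length ∧ w.length ≤ k ∧ (∀ x ∈ w, x ∈ S) ∧ M = w.prod}

lemma stdBasisMatrix_apply' {n : ℕ} (i j p q : Fin n) :
    Matrix.single i j (1:ℂ) p q = if i = p ∧ j = q then 1 else 0 := rfl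

lemma jordan_pow (n k : ℕ) :
    (jordan n) ^ k = Matrix.of fun a b : Fin n => if (a : ℕ) + k = (b : ℕ) then (1:ℂ) else 0 := by
  induction k with
  | zero =>
    ext a b
    simp [Matrix.one_apply, Fin.ext_iff, eq_comm]
  | succ k ih =>
    ext a b
    rw [pow_succ, ih]
    simp only [Matrix.mul_apply, Matrix.of_apply, jordan]
    by_cases h : (a : ℕ) + k < n
    · rw [Finset.sum_eq_single ⟨(a : ℕ) + k, h⟩, if_pos rfl, one_mul]
      · show (if (a:ℕ) + k + 1 = (b:ℕ) then (1:ℂ) else 0) = _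
        rw [← add_assoc]
      · intro c _ hc
        rw [if_neg fun hh => hc (Fin.ext hh.symm), zero_mul]
      · intro hmem; exact absurd (Finset.mem_univ _) hmem
    · rw [Finset.sum_eq_zero fun c _ => by
        rw [if_neg fun hh => h (by rw [hh]; exact c.isLt), zero_mul],
        if_neg (by omega)]

lemma jordan_pow_mul_E (n : ℕ) (i j : Fin n) (a : ℕ) :
    (jordan n) ^ a * Matrix.single i j (1 : ℂ) =
      if h : a ≤ (i : ℕ) then Matrix.single ⟨(i : ℕ) - a, by omega⟩ j 1 else 0 := by
  ext p q
  rw [jordan_pow]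
  simp only [Matrix.mul_apply, Matrix.of_apply, stdBasisMatrix_apply']
  have step : ∑ c : Fin n, (if (p:ℕ) + a = (c:ℕ) then (1:ℂ) else 0) *
      (if i = c ∧ j = q then (1:ℂ) else 0)
      = (if (p:ℕ) + a = (i:ℕ) then (1:ℂ) else 0) * (if j = q then 1 else 0) := by
    rw [Finset.sum_eq_single i]
    · congr 1
      by_cases hj : j = q
      · simp [hj]
      · simp [hj]
    · intro c _ hc
      rw [show (if i = c ∧ j = q then (1:ℂ) else 0) = 0 from if_neg fun hh => hc hh.1.symm,
        mul_zero]
    · intro hmem; exact absurd (Finset.mem_univ _) hmem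
  rw [step]
  by_cases h : a ≤ (i : ℕ)
  · rw [dif_pos h]
    simp only [stdBasisMatrix_apply', Fin.ext_iff]
    split_ifs <;> first | (exfalso; omega) | norm_num
  · rw [dif_neg h]
    simp only [Matrix.zero_apply, Fin.ext_iff]
    split_ifs <;> first | (exfalso; omega) | norm_num

lemma E_mul_jordan_pow (n : ℕ) (i j : Fin n) (b : ℕ) :
    Matrix.single i j (1 : ℂ) * (jordan n) ^ b =
      if h : (j : ℕ) + b < n then Matrix.single i ⟨(j : ℕ) + b, h⟩ 1 else 0 := by
  ext p q
  rw [jordan_pow]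
  simp only [Matrix.mul_apply, Matrix.of_apply, stdBasisMatrix_apply']
  have step : ∑ c : Fin n, (if i = p ∧ j = c then (1:ℂ) else 0) *
      (if (c:ℕ) + b = (q:ℕ) then (1:ℂ) else 0)
      = (if i = p then (1:ℂ) else 0) * (if (j:ℕ) + b = (q:ℕ) then 1 else 0) := by
    rw [Finset.sum_eq_single j]
    · congr 1
      by_cases hi : i = p
      · simp [hi]
      · simp [hi]
    · intro c _ hc
      rw [show (if i = p ∧ j = c then (1:ℂ) else 0) = 0 from if_neg fun hh => hc hh.2.symm,
        zero_mul]
    · intro hmem; exact absurd (Finset.mem_univ _) hmem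
  rw [step]
  by_cases h : (j : ℕ) + b < n
  · rw [dif_pos h]
    simp only [stdBasisMatrix_apply', Fin.ext_iff]
    split_ifs <;> first | (exfalso; omega) | norm_num
  · rw [dif_neg h]
    simp only [Matrix.zero_apply, Fin.ext_iff]
    split_ifs <;> first | (exfalso; omega) | norm_num

def Bmat (n : ℕ) (hn : 3 ≤ n) : Matrix (Fin n) (Fin n) ℂ :=
  Matrix.single ⟨n - 2, by have := hn; omega⟩ ⟨0, by have := hn; omega⟩ (1 : ℂ) -
    Matrix.single ⟨n - 1, by have := hn; omega⟩ ⟨1, by have := hn; omega⟩ (1 : ℂ)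

lemma JEJ_apply (n : ℕ) (i j : Fin n) (a b : ℕ) (p q : Fin n) :
    ((jordan n) ^ a * Matrix.single i j (1:ℂ) * (jordan n) ^ b) p q =
      if (p : ℕ) + a = (i : ℕ) ∧ (j : ℕ) + b = (q : ℕ) then 1 else 0 := by
  rw [jordan_pow_mul_E]
  by_cases h : a ≤ (i : ℕ)
  · rw [dif_pos h, E_mul_jordan_pow]
    by_cases h2 : (j : ℕ) + b < n
    · rw [dif_pos h2, stdBasisMatrix_apply']
      simp only [Fin.ext_iff]
      split_ifs <;> first | (exfalso; omega) | norm_num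
    · rw [dif_neg h2]
      simp only [Matrix.zero_apply]
      rw [if_neg (by omega)]
  · rw [dif_neg h, zero_mul]
    simp only [Matrix.zero_apply]
    rw [if_neg (by omega)]

lemma EJ_apply (n : ℕ) (i j : Fin n) (c : ℕ) (p q : Fin n) :
    (Matrix.single i j (1:ℂ) * (jordan n) ^ c) p q =
      if (i : ℕ) = (p : ℕ) ∧ (j : ℕ) + c = (q : ℕ) then 1 else 0 := by
  rw [E_mul_jordan_pow]
  by_cases h2 : (j : ℕ) + c < n
  · rw [dif_pos h2, stdBasisMatrix_apply']
    simp only [Fin.ext_iff]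
    try split_ifs <;> first | (exfalso; omega) | norm_num
  · rw [dif_neg h2]
    simp only [Matrix.zero_apply]
    rw [if_neg (by omega)]

lemma word1_apply (n : ℕ) (hn : 3 ≤ n) (a b : ℕ) (p q : Fin n) :
    ((jordan n) ^ a * Bmat n hn * (jordan n) ^ b) p q =
      (if (p : ℕ) + a = n - 2 ∧ 0 + b = (q : ℕ) then 1 else 0) -
        (if (p : ℕ) + a = n - 1 ∧ 1 + b = (q : ℕ) then 1 else 0) := by
  rw [show (jordan n) ^ a * Bmat n hn * (jordan n) ^ b =
    ((jordan n) ^ a * Matrix.single ⟨n - 2, by have := hn; omega⟩ ⟨0, by have := hn; omega⟩ 1 * (jordan n) ^ b) -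
    ((jordan n) ^ a * Matrix.single ⟨n - 1, by have := hn; omega⟩ ⟨1, by have := hn; omega⟩ 1 * (jordan n) ^ b) by
      rw [Bmat, mul_sub, sub_mul]]
  rw [Matrix.sub_apply, JEJ_apply, JEJ_apply]

lemma BJ_apply (n : ℕ) (hn : 3 ≤ n) (c : ℕ) (p q : Fin n) :
    (Bmat n hn * (jordan n) ^ c) p q =
      (if n - 2 = (p : ℕ) ∧ 0 + c = (q : ℕ) then 1 else 0) -
        (if n - 1 = (p : ℕ) ∧ 1 + c = (q : ℕ) then 1 else 0) := by
  rw [show Bmat n hn * (jordan n) ^ c =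
    (Matrix.single ⟨n - 2, by have := hn; omega⟩ ⟨0, by have := hn; omega⟩ 1 * (jordan n) ^ c) -
    (Matrix.single ⟨n - 1, by have := hn; omega⟩ ⟨1, by have := hn; omega⟩ 1 * (jordan n) ^ c) by
      rw [Bmat, sub_mul]]
  rw [Matrix.sub_apply, EJ_apply, EJ_apply]

lemma collapse (n : ℕ) (P Q : Prop) [Decidable P] [Decidable Q] (u v : ℕ) (hv : v < n) :
    ∑ r : Fin n, (if P ∧ u = (r : ℕ) then (1:ℂ) else 0) *
      (if v = (r : ℕ) ∧ Q then (1:ℂ) else 0) = if P ∧ (u = v ∧ Q) then 1 else 0 := by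
  rw [Finset.sum_eq_single ⟨v, hv⟩]
  · by_cases hP : P <;> by_cases hQ : Q <;> by_cases huv : u = v <;> simp_all
  · intro r _ hr
    rw [show (if v = (r : ℕ) ∧ Q then (1:ℂ) else 0) = 0 from
      if_neg fun hh => hr (Fin.ext hh.1.symm), mul_zero]
  · intro hmem; exact absurd (Finset.mem_univ _) hmem

lemma word2_apply (n : ℕ) (hn : 3 ≤ n) (a b c : ℕ) (p q : Fin n) :
    ((jordan n) ^ a * Bmat n hn * (jordan n) ^ b * (Bmat n hn * (jordan n) ^ c)) p q =
      ((if (p : ℕ) + a = n - 2 ∧ (0 + b = n - 2 ∧ 0 + c = (q : ℕ)) then 1 else 0) -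
        (if (p : ℕ) + a = n - 2 ∧ (0 + b = n - 1 ∧ 1 + c = (q : ℕ)) then 1 else 0)) -
      ((if (p : ℕ) + a = n - 1 ∧ (1 + b = n - 2 ∧ 0 + c = (q : ℕ)) then 1 else 0) -
        (if (p : ℕ) + a = n - 1 ∧ (1 + b = n - 1 ∧ 1 + c = (q : ℕ)) then 1 else 0)) := by
  rw [Matrix.mul_apply]
  have : ∀ r : Fin n, ((jordan n) ^ a * Bmat n hn * (jordan n) ^ b) p r *
      (Bmat n hn * (jordan n) ^ c) r q =
      ((if (p : ℕ) + a = n - 2 ∧ 0 + b = (r : ℕ) then (1:ℂ) else 0) *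
        (if n - 2 = (r : ℕ) ∧ 0 + c = (q : ℕ) then 1 else 0) -
       (if (p : ℕ) + a = n - 2 ∧ 0 + b = (r : ℕ) then (1:ℂ) else 0) *
        (if n - 1 = (r : ℕ) ∧ 1 + c = (q : ℕ) then 1 else 0)) -
      ((if (p : ℕ) + a = n - 1 ∧ 1 + b = (r : ℕ) then (1:ℂ) else 0) *
        (if n - 2 = (r : ℕ) ∧ 0 + c = (q : ℕ) then 1 else 0) -
       (if (p : ℕ) + a = n - 1 ∧ 1 + b = (r : ℕ) then (1:ℂ) else 0) *
        (if n - 1 = (r : ℕ) ∧ 1 + c = (q : ℕ) then 1 else 0)) := by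
    intro r
    rw [word1_apply n hn, BJ_apply n hn]
    ring
  rw [Finset.sum_congr rfl fun r _ => this r]
  rw [Finset.sum_sub_distrib, Finset.sum_sub_distrib, Finset.sum_sub_distrib,
    collapse n _ _ _ _ (show n - 2 < n by omega),
    collapse n _ _ _ _ (show n - 1 < n by omega),
    collapse n _ _ _ _ (show n - 2 < n by omega),
    collapse n _ _ _ _ (show n - 1 < n by omega)]

lemma word1_mem (n : ℕ) (hn : 3 ≤ n) (a b : ℕ) (h : a + b + 1 ≤ 2 * n - 2) :
    (jordan n) ^ a * Bmat n hn * (jordan n) ^ b ∈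
      wordSpan0 n (2 * n - 2) {jordan n, Bmat n hn} := by
  apply Submodule.subset_span
  refine ⟨List.replicate a (jordan n) ++ Bmat n hn :: List.replicate b (jordan n),
    by simp; omega, by simp; omega, ?_, ?_⟩
  · intro x hx
    simp only [List.mem_append, List.mem_cons, List.mem_replicate] at hx
    rcases hx with ⟨-, rfl⟩ | rfl | ⟨-, rfl⟩ <;> simp [Set.mem_insert_iff]
  · simp [List.prod_append, List.prod_cons, List.prod_replicate, mul_assoc]

lemma word2_mem (n : ℕ) (hn : 3 ≤ n) (a b c : ℕ) (h : a + b + c + 2 ≤ 2 * n - 2) :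
    (jordan n) ^ a * Bmat n hn * (jordan n) ^ b * (Bmat n hn * (jordan n) ^ c) ∈
      wordSpan0 n (2 * n - 2) {jordan n, Bmat n hn} := by
  apply Submodule.subset_span
  refine ⟨List.replicate a (jordan n) ++ Bmat n hn ::
      (List.replicate b (jordan n) ++ Bmat n hn :: List.replicate c (jordan n)),
    by simp; omega, by simp; omega, ?_, ?_⟩
  · intro x hx
    simp only [List.mem_append, List.mem_cons, List.mem_replicate] at hx
    rcases hx with ⟨-, rfl⟩ | rfl | ⟨-, rfl⟩ | rfl | ⟨-, rfl⟩ <;> simp [Set.mem_insert_iff]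
  · simp [List.prod_append, List.prod_cons, List.prod_replicate, mul_assoc]

set_option maxHeartbeats 2000000 in
lemma E_mem (n : ℕ) (hn : 3 ≤ n) (i j : ℕ) (hi : i < n) (hj : j < n) :
    Matrix.single ⟨i, hi⟩ ⟨j, hj⟩ (1 : ℂ) ∈
      wordSpan0 n (2 * n - 2) {jordan n, Bmat n hn} := by
  by_cases hij : j ≤ i
  · -- lower triangle (including diagonal)
    by_cases hitop : i ≤ n - 2
    · -- Case A
      have key : Matrix.single ⟨i, hi⟩ ⟨j, hj⟩ (1 : ℂ) =
          (2⁻¹ : ℂ) • ((jordan n) ^ (n - 2 - i) * Bmat n hn * (jordan n) ^ j +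
            (jordan n) ^ (n - 2 - i) * Bmat n hn * (jordan n) ^ (n - 2) *
              (Bmat n hn * (jordan n) ^ j)) := by
        ext p q
        simp only [Matrix.smul_apply, Matrix.add_apply, word1_apply n hn, word2_apply n hn,
          stdBasisMatrix_apply', Fin.ext_iff, smul_eq_mul]
        split_ifs <;> first | (exfalso; omega) | norm_num
      rw [key]
      exact Submodule.smul_mem _ _ (add_mem (word1_mem n hn _ _ (by omega))
        (word2_mem n hn _ _ _ (by omega)))
    · -- i = n - 1
      by_cases hj0 : 1 ≤ j
      · -- Case B
        have key : Matrix.single ⟨i, hi⟩ ⟨j, hj⟩ (1 : ℂ) =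
            (2⁻¹ : ℂ) • ((jordan n) ^ 0 * Bmat n hn * (jordan n) ^ (n - 2) *
                (Bmat n hn * (jordan n) ^ (j - 1)) -
              (jordan n) ^ 0 * Bmat n hn * (jordan n) ^ (j - 1)) := by
          ext p q
          simp only [Matrix.smul_apply, Matrix.sub_apply, word1_apply n hn, word2_apply n hn,
            stdBasisMatrix_apply', Fin.ext_iff, smul_eq_mul]
          split_ifs <;> first | (exfalso; omega) | norm_num
        rw [key]
        exact Submodule.smul_mem _ _ (sub_mem (word2_mem n hn _ _ _ (by omega))
          (word1_mem n hn _ _ (by omega)))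
      · -- Case C : i = n-1, j = 0
        have key : Matrix.single ⟨i, hi⟩ ⟨j, hj⟩ (1 : ℂ) =
            -((jordan n) ^ 0 * Bmat n hn * (jordan n) ^ (n - 3) *
              (Bmat n hn * (jordan n) ^ 0)) := by
          ext p q
          simp only [Matrix.neg_apply, word2_apply n hn, stdBasisMatrix_apply', Fin.ext_iff]
          split_ifs <;> first | (exfalso; omega) | norm_num
        rw [key]
        exact neg_mem (word2_mem n hn _ _ _ (by omega))
  · -- Case D : upper triangle j > i
    set f : ℕ → Matrix (Fin n) (Fin n) ℂ := fun t =>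
      if h : t < n ∧ (j - i) + t < n then Matrix.single ⟨t, h.1⟩ ⟨(j - i) + t, h.2⟩ 1 else 0
      with hf
    have termEq : ∀ t ∈ Finset.range i,
        (jordan n) ^ (n - 2 - t) * Bmat n hn * (jordan n) ^ ((j - i) + t) =
          f t - f (t + 1) := by
      intro t ht
      rw [Finset.mem_range] at ht
      simp only [hf]
      rw [dif_pos ⟨by omega, by omega⟩, dif_pos ⟨by omega, by omega⟩]
      ext p q
      simp only [Matrix.sub_apply, word1_apply n hn, stdBasisMatrix_apply', Fin.ext_iff]
      split_ifs <;> first | (exfalso; omega) | norm_num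
    have key : Matrix.single ⟨i, hi⟩ ⟨j, hj⟩ (1 : ℂ) =
        -((jordan n) ^ (n - 1) * Bmat n hn * (jordan n) ^ (j - i - 1)) -
          ∑ t ∈ Finset.range i, ((jordan n) ^ (n - 2 - t) * Bmat n hn *
            (jordan n) ^ ((j - i) + t)) := by
      rw [Finset.sum_congr rfl termEq, Finset.sum_range_sub' f i]
      have hf0 : f 0 = Matrix.single ⟨0, by omega⟩ ⟨(j - i) + 0, by omega⟩ 1 :=
        dif_pos ⟨by omega, by omega⟩
      have hfi : f i = Matrix.single ⟨i, hi⟩ ⟨(j - i) + i, by omega⟩ 1 :=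
        dif_pos ⟨by omega, by omega⟩
      rw [hf0, hfi]
      ext p q
      simp only [Matrix.sub_apply, Matrix.neg_apply, word1_apply n hn,
        stdBasisMatrix_apply', Fin.ext_iff]
      split_ifs <;> first | (exfalso; omega) | norm_num
    rw [key]
    exact sub_mem (neg_mem (word1_mem n hn _ _ (by omega)))
      (Submodule.sum_mem _ fun t ht => word1_mem n hn _ _
        (by have := Finset.mem_range.mp ht; omega))

/-- For `n ≥ 3` and `B_n = E_{n-1,1} - E_{n,2}`: the span of words in `{J_n, B_n}` of
length between `1` and `2n - 2` is all of `M_n(ℂ)` (so `l_0({J_n, B_n}) = 2n - 2`). -/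
theorem stmt_10 (n : ℕ) (hn : 3 ≤ n) :
    let B : Matrix (Fin n) (Fin n) ℂ :=
      Matrix.single ⟨n - 2, by omega⟩ ⟨0, by omega⟩ (1 : ℂ) -
        Matrix.single ⟨n - 1, by omega⟩ ⟨1, by omega⟩ (1 : ℂ)
    wordSpan0 n (2 * n - 2) {jordan n, B} = ⊤ := by
  intro B
  show wordSpan0 n (2 * n - 2) {jordan n, Bmat n hn} = ⊤
  rw [eq_top_iff]
  rintro M -
  rw [matrix_eq_sum_single M]
  refine Submodule.sum_mem _ fun p _ => Submodule.sum_mem _ fun q _ => ?_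
  have hE : Matrix.single p q (M p q) = M p q • Matrix.single p q (1:ℂ) := by
    rw [smul_single, smul_eq_mul, mul_one]
  rw [hE]
  exact Submodule.smul_mem _ _ (E_mem n hn p q p.isLt q.isLt)
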